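/- For every n ∈ ℕ, every subspace S ⊆ 𝔽₂^{2n}, and every 2^n × 2^n complex matrix A, the Pauli projection is a contraction in operator norm: ∥Π_S(A)∥_op ≤ ∥A∥_op. -/

import Mathlib

open scoped Kronecker Classical Matrix

namespace PauliSpec

/-- The field 𝔽₂. -/
abbrev F2 := ZMod 2

/-- The phase space 𝔽₂^{2n}, identified with pairs `(xX, xZ) ∈ 𝔽₂^n × 𝔽₂^n`. -/
abbrev PhS (n : ℕ) := (Fin n → F2) × (Fin n → F2)

/-- Index type for `n`-qubit matrices: ℂ^{2^n} ≅ ⊗_{j=1}^n ℂ². -/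
abbrev QIdx (n : ℕ) := Fin n → Fin 2

/-- The 2×2 Pauli X matrix. -/
def PauliX : Matrix (Fin 2) (Fin 2) ℂ := !![0, 1; 1, 0]

/-- The 2×2 Pauli Y matrix. -/
def PauliY : Matrix (Fin 2) (Fin 2) ℂ := !![0, -Complex.I; Complex.I, 0]

/-- The 2×2 Pauli Z matrix. -/
def PauliZ : Matrix (Fin 2) (Fin 2) ℂ := !![1, 0; 0, -1]

/-- The Weyl operator `W_x := i^{xX·xZ} ⊗_j (X^{xX_j} Z^{xZ_j})`, written entrywise:
the `(u, v)` entry of the `n`-fold Kronecker product of matrices `M_j` is `∏_j (M_j)_{u_j v_j}`. -/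
noncomputable def Weyl {n : ℕ} (x : PhS n) : Matrix (QIdx n) (QIdx n) ℂ :=
  fun u v =>
    (Complex.I ^ (∑ j, (x.1 j).val * (x.2 j).val)) *
      ∏ j, (PauliX ^ (x.1 j).val * PauliZ ^ (x.2 j).val) (u j) (v j)

/-- The symplectic product `[x,y] := ∑_j (xX_j·yZ_j + xZ_j·yX_j) ∈ 𝔽₂`. -/
def sympl {n : ℕ} (x y : PhS n) : F2 :=
  ∑ j, (x.1 j * y.2 j + x.2 j * y.1 j)

lemma sympl_add_left {n : ℕ} (x y z : PhS n) :
    sympl (x + y) z = sympl x z + sympl y z := by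
  simp only [sympl, Prod.fst_add, Prod.snd_add, Pi.add_apply, add_mul]
  rw [← Finset.sum_add_distrib]
  exact Finset.sum_congr rfl fun j _ => by ring

lemma sympl_smul_left {n : ℕ} (c : F2) (x z : PhS n) :
    sympl (c • x) z = c * sympl x z := by
  simp only [sympl, Prod.smul_fst, Prod.smul_snd, Pi.smul_apply, smul_eq_mul, Finset.mul_sum]
  exact Finset.sum_congr rfl fun j _ => by ring

/-- The symplectic complement `S^⊥ := {x : [x,y] = 0 for all y ∈ S}`. -/
def symplComplement {n : ℕ} (S : Submodule F2 (PhS n)) : Submodule F2 (PhS n) where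
  carrier := {x | ∀ y ∈ S, sympl x y = 0}
  add_mem' := by
    intro a b ha hb y hy
    rw [sympl_add_left, ha y hy, hb y hy, add_zero]
  zero_mem' := by
    intro y hy
    simp [sympl]
  smul_mem' := by
    intro c x hx y hy
    rw [sympl_smul_left, hx y hy, mul_zero]

/-- The Pauli support `supp(A) := {x : tr(W_x·A) ≠ 0}`. -/
noncomputable def pauliSupport {n : ℕ} (A : Matrix (QIdx n) (QIdx n) ℂ) : Set (PhS n) :=
  {x | (Weyl x * A).trace ≠ 0}

/-- The Pauli projection `Π_S(A) := 2^{−n} ∑_{x∈S} tr(A·W_x)·W_x`. -/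
noncomputable def pauliProj {n : ℕ} (S : Set (PhS n)) (A : Matrix (QIdx n) (QIdx n) ℂ) :
    Matrix (QIdx n) (QIdx n) ℂ :=
  (2 ^ n : ℂ)⁻¹ • ∑ᶠ x ∈ S, (A * Weyl x).trace • Weyl x

/-- The subspace `𝒲_{a,b} ⊆ 𝔽₂^{2n}`: `xX_j = 0` on the first `n−a` coordinates and
`xZ_j = 0` on the first `n−a−b` coordinates. -/
def Wab (n a b : ℕ) : Submodule F2 (PhS n) where
  carrier := {x | (∀ j : Fin n, (j : ℕ) < n - a → x.1 j = 0) ∧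
    ∀ j : Fin n, (j : ℕ) < n - a - b → x.2 j = 0}
  add_mem' := by
    rintro x y ⟨hx1, hx2⟩ ⟨hy1, hy2⟩
    refine ⟨fun j hj => ?_, fun j hj => ?_⟩
    · simp [Prod.fst_add, Pi.add_apply, hx1 j hj, hy1 j hj]
    · simp [Prod.snd_add, Pi.add_apply, hx2 j hj, hy2 j hj]
  zero_mem' := ⟨fun j _ => rfl, fun j _ => rfl⟩
  smul_mem' := by
    rintro c x ⟨hx1, hx2⟩
    refine ⟨fun j hj => ?_, fun j hj => ?_⟩
    · simp [Prod.smul_fst, Pi.smul_apply, hx1 j hj]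
    · simp [Prod.smul_snd, Pi.smul_apply, hx2 j hj]

/-- `A` is `(a,b)`-block-diagonal: under ℂ^{2^n} ≅ ℂ^{2^{n−a−b}} ⊗ ℂ^{2^b} ⊗ ℂ^{2^a},
`A = I ⊗ (∑_{y∈{0,1}^b} |y⟩⟨y| ⊗ A_y)`.  Entrywise: `A u v = 0` unless `u, v` agree on the
first `n−a` coordinates, and then the entry is `A_{u₂}(u₃, v₃)` where `u₂` is the middle `b`
coordinates and `u₃, v₃` the last `a` coordinates. -/
def IsBlockDiag {n : ℕ} (a b : ℕ) (hab : a + b ≤ n)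
    (A : Matrix (QIdx n) (QIdx n) ℂ) : Prop :=
  ∃ M : (Fin b → Fin 2) → Matrix (Fin a → Fin 2) (Fin a → Fin 2) ℂ,
    ∀ u v : QIdx n,
      A u v =
        if ∀ j : Fin n, (j : ℕ) < n - a → u j = v j then
          M (fun i => u ⟨n - a - b + i.1, by have := i.2; omega⟩)
            (fun i => u ⟨n - a + i.1, by have := i.2; omega⟩)
            (fun i => v ⟨n - a + i.1, by have := i.2; omega⟩)
        else 0

/-- The ℓ² → ℓ² operator norm of a complex matrix. -/
noncomputable def l2OpNorm {ι κ : Type*} [Fintype ι] [Fintype κ] [DecidableEq κ]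
    (A : Matrix ι κ ℂ) : ℝ :=
  ‖LinearMap.toContinuousLinearMap (Matrix.toEuclideanLin A)‖

/-- `C` is a Clifford unitary: it is unitary and conjugates every Weyl operator to a
signed Weyl operator. -/
def IsCliffordUnitary {n : ℕ} (C : Matrix (QIdx n) (QIdx n) ℂ) : Prop :=
  C ∈ Matrix.unitaryGroup (QIdx n) ℂ ∧
    ∀ x : PhS n, ∃ (y : PhS n) (s : ℂ), (s = 1 ∨ s = -1) ∧ C * Weyl x * Cᴴ = s • Weyl y

/-- `C T C† := {y : ∃ x ∈ T, C·W_x·C† = ±W_y}`. -/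
def conjSet {n : ℕ} (C : Matrix (QIdx n) (QIdx n) ℂ) (T : Set (PhS n)) : Set (PhS n) :=
  {y | ∃ x ∈ T, ∃ s : ℂ, (s = 1 ∨ s = -1) ∧ C * Weyl x * Cᴴ = s • Weyl y}

/-- The matrix acting as the 2×2 matrix `P` on qubit `i` and as the identity elsewhere:
`P_i := I^{⊗(i−1)} ⊗ P ⊗ I^{⊗(n−i)}`. -/
def onQubit {n : ℕ} (P : Matrix (Fin 2) (Fin 2) ℂ) (i : Fin n) :
    Matrix (QIdx n) (QIdx n) ℂ :=
  fun u v => if ∀ j : Fin n, j ≠ i → u j = v j then P (u i) (v i) else 0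

/-- The unitary on `2n` qubits exchanging the `i`-th qubit of the first group of `n`
qubits with the `i`-th qubit of the second group. -/
def swapQubit {n : ℕ} (i : Fin n) :
    Matrix (QIdx n × QIdx n) (QIdx n × QIdx n) ℂ :=
  fun p q =>
    if p.1 = Function.update q.1 i (q.2 i) ∧ p.2 = Function.update q.2 i (q.1 i) then 1 else 0


section Aux
open Matrix
open scoped Matrix.Norms.L2Operator
variable {n : ℕ}

noncomputable def PQ (a b : F2) : Matrix (Fin 2) (Fin 2) ℂ := PauliX ^ a.val * PauliZ ^ b.val

lemma F2cases : ∀ a : F2, a = 0 ∨ a = 1 := by decide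

lemma sumF2 {M : Type*} [AddCommMonoid M] (f : F2 → M) : ∑ a, f a = f 0 + f 1 := by
  rw [show (Finset.univ : Finset F2) = {0, 1} from rfl]; simp

lemma PQ00 : PQ 0 0 = !![1,0;0,1] := by
  norm_num [PQ, show ((0:F2)).val = 0 from rfl]; exact Matrix.one_fin_two
lemma PQ10 : PQ 1 0 = !![0,1;1,0] := by
  norm_num [PQ, PauliX, show ((0:F2)).val = 0 from rfl, show ((1:F2)).val = 1 from rfl]
lemma PQ01 : PQ 0 1 = !![1,0;0,-1] := by
  norm_num [PQ, PauliZ, show ((0:F2)).val = 0 from rfl, show ((1:F2)).val = 1 from rfl]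
lemma PQ11 : PQ 1 1 = !![0,-1;1,0] := by
  norm_num [PQ, PauliX, PauliZ, show ((1:F2)).val = 1 from rfl, Matrix.mul_fin_two]

lemma PQ_mul (a b c d : F2) :
    PQ a b * PQ c d = ((-1 : ℂ) ^ (b.val * c.val)) • PQ (a + c) (b + d) := by
  rcases F2cases a with rfl | rfl <;> rcases F2cases b with rfl | rfl <;>
    rcases F2cases c with rfl | rfl <;> rcases F2cases d with rfl | rfl <;>
    simp only [PQ00, PQ10, PQ01, PQ11, show ((1:F2)+1) = 0 from rfl, add_zero, zero_add,
      show ((0:F2)).val = 0 from rfl, show ((1:F2)).val = 1 from rfl, Matrix.mul_fin_two] <;>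
    norm_num [Matrix.smul_of]

lemma PQ_conj (a b : F2) (s t : Fin 2) :
    (starRingEnd ℂ) (PQ a b t s) = ((-1 : ℂ) ^ (a.val * b.val)) * PQ a b s t := by
  rcases F2cases a with rfl | rfl <;> rcases F2cases b with rfl | rfl <;>
    fin_cases s <;> fin_cases t <;>
    norm_num [PQ00, PQ10, PQ01, PQ11,
      show ((0:F2)).val = 0 from rfl, show ((1:F2)).val = 1 from rfl]

lemma PQ_ortho (p q u v : Fin 2) :
    ∑ a : F2, ∑ b : F2, ((-1 : ℂ) ^ (a.val * b.val) * (PQ a b q p * PQ a b u v)) =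
      if u = p ∧ q = v then 2 else 0 := by
  fin_cases p <;> fin_cases q <;> fin_cases u <;> fin_cases v <;>
    norm_num [sumF2, PQ00, PQ10, PQ01, PQ11,
      show ((0:F2)).val = 0 from rfl, show ((1:F2)).val = 1 from rfl]

def sPh {n : ℕ} (x : PhS n) : ℕ := ∑ j, (x.1 j).val * (x.2 j).val

lemma weyl_apply (x : PhS n) (u v : QIdx n) :
    Weyl x u v = Complex.I ^ sPh x * ∏ j, PQ (x.1 j) (x.2 j) (u j) (v j) := rfl

lemma PQ00' : PQ 0 0 = 1 := by rw [PQ00]; exact Matrix.one_fin_two.symm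

lemma sPh_zero : sPh (0 : PhS n) = 0 := by
  simp [sPh, show ∀ j : Fin n, ((0 : PhS n).1 j) = 0 from fun _ => rfl]

lemma weyl_zero : Weyl (0 : PhS n) = 1 := by
  ext u v
  rw [weyl_apply, sPh_zero, pow_zero, one_mul]
  have h : ∀ j : Fin n, PQ ((0:PhS n).1 j) ((0:PhS n).2 j) (u j) (v j)
      = if u j = v j then (1:ℂ) else 0 := fun j => by
    rw [show (0:PhS n).1 j = 0 from rfl, show (0:PhS n).2 j = 0 from rfl, PQ00']
    exact Matrix.one_apply
  simp only [h]
  rw [Matrix.one_apply]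
  by_cases huv : u = v
  · subst huv; simp
  · rw [if_neg huv]
    obtain ⟨j, hj⟩ := Function.ne_iff.mp huv
    exact Finset.prod_eq_zero (Finset.mem_univ j) (if_neg hj)

lemma weyl_mul (x y : PhS n) :
    Weyl x * Weyl y =
      (Complex.I ^ (sPh x + sPh y) * (-1 : ℂ) ^ (∑ j, (x.2 j).val * (y.1 j).val) /
        Complex.I ^ sPh (x + y)) • Weyl (x + y) := by
  ext u v
  have key : ∀ j : Fin n, (∑ w : Fin 2,
      PQ (x.1 j) (x.2 j) (u j) w * PQ (y.1 j) (y.2 j) w (v j))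
      = (-1 : ℂ) ^ ((x.2 j).val * (y.1 j).val) *
        PQ ((x + y).1 j) ((x + y).2 j) (u j) (v j) := by
    intro j
    have h := congrFun (congrFun (PQ_mul (x.1 j) (x.2 j) (y.1 j) (y.2 j)) (u j)) (v j)
    simpa [Matrix.mul_apply, Matrix.smul_apply, smul_eq_mul] using h
  rw [Matrix.mul_apply, Matrix.smul_apply, smul_eq_mul]
  simp only [weyl_apply]
  have swap : (∑ w : QIdx n, ∏ j, (PQ (x.1 j) (x.2 j) (u j) (w j) *
      PQ (y.1 j) (y.2 j) (w j) (v j)))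
      = ∏ j, ∑ t : Fin 2, (PQ (x.1 j) (x.2 j) (u j) t * PQ (y.1 j) (y.2 j) t (v j)) :=
    (Fintype.prod_sum (fun (j : Fin n) (t : Fin 2) =>
      PQ (x.1 j) (x.2 j) (u j) t * PQ (y.1 j) (y.2 j) t (v j))).symm
  calc ∑ w : QIdx n, (Complex.I ^ sPh x * ∏ j, PQ (x.1 j) (x.2 j) (u j) (w j)) *
        (Complex.I ^ sPh y * ∏ j, PQ (y.1 j) (y.2 j) (w j) (v j))
      = Complex.I ^ sPh x * Complex.I ^ sPh y *
        ∑ w : QIdx n, ∏ j, (PQ (x.1 j) (x.2 j) (u j) (w j) *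
          PQ (y.1 j) (y.2 j) (w j) (v j)) := by
        rw [Finset.mul_sum]
        refine Finset.sum_congr rfl fun w _ => ?_
        rw [Finset.prod_mul_distrib]; ring
    _ = Complex.I ^ sPh x * Complex.I ^ sPh y *
        ∏ j, ((-1 : ℂ) ^ ((x.2 j).val * (y.1 j).val) *
          PQ ((x + y).1 j) ((x + y).2 j) (u j) (v j)) := by
        rw [swap]; congr 1; exact Finset.prod_congr rfl fun j _ => key j
    _ = Complex.I ^ (sPh x + sPh y) * (-1 : ℂ) ^ (∑ j, (x.2 j).val * (y.1 j).val) *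
        ∏ j, PQ ((x + y).1 j) ((x + y).2 j) (u j) (v j) := by
        rw [Finset.prod_mul_distrib, Finset.prod_pow_eq_pow_sum, pow_add]; ring
    _ = Complex.I ^ (sPh x + sPh y) * (-1 : ℂ) ^ (∑ j, (x.2 j).val * (y.1 j).val) /
        Complex.I ^ sPh (x + y) *
        (Complex.I ^ sPh (x + y) * ∏ j, PQ ((x + y).1 j) ((x + y).2 j) (u j) (v j)) := by
        rw [div_mul_eq_mul_div, mul_comm (Complex.I ^ sPh (x + y)), ← mul_assoc, mul_div_assoc,
          div_self (pow_ne_zero _ Complex.I_ne_zero), mul_one]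

lemma valCast : ∀ a : F2, ((a.val : F2)) = a := by decide

lemma neg_one_pow_natCast_val (N : ℕ) : ((-1:ℂ)) ^ ((N : F2)).val = (-1:ℂ) ^ N := by
  rw [ZMod.val_natCast]
  conv_rhs => rw [← Nat.div_add_mod N 2]
  rw [pow_add, pow_mul, neg_one_sq, one_pow, one_mul]

lemma sympl_comm (x y : PhS n) : sympl x y = sympl y x :=
  Finset.sum_congr rfl fun j _ => by ring

lemma sympl_eq_cast (x y : PhS n) :
    sympl x y = ((∑ j, ((x.1 j).val * (y.2 j).val + (x.2 j).val * (y.1 j).val) : ℕ) : F2) := by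
  rw [sympl, Nat.cast_sum]
  exact Finset.sum_congr rfl fun j _ => by push_cast [valCast]; ring

lemma add_self_eq_zero' (x : PhS n) : x + x = 0 := by
  apply Prod.ext <;> funext j <;>
    simp [Prod.fst_add, Prod.snd_add, Pi.add_apply, CharTwo.add_self_eq_zero]

lemma weyl_self (x : PhS n) : Weyl x * Weyl x = 1 := by
  rw [weyl_mul, add_self_eq_zero' x, weyl_zero, sPh_zero, pow_zero, div_one]
  have h1 : (∑ j, ((x.2 j).val * (x.1 j).val)) = sPh x :=
    Finset.sum_congr rfl fun j _ => Nat.mul_comm _ _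
  have h2 : (Complex.I ^ (sPh x + sPh x) * (-1:ℂ) ^ ∑ j, (x.2 j).val * (x.1 j).val) = 1 := by
    rw [h1, ← two_mul, pow_mul, Complex.I_sq, ← pow_add, ← two_mul, pow_mul, neg_one_sq, one_pow]
  rw [h2, one_smul]

lemma weyl_comm (x y : PhS n) :
    Weyl x * Weyl y = ((-1:ℂ) ^ (sympl x y).val) • (Weyl y * Weyl x) := by
  rw [weyl_mul x y, weyl_mul y x, show y + x = x + y from add_comm y x, smul_smul]
  congr 1
  have hv : ((-1:ℂ)) ^ (sympl x y).val =
      (-1:ℂ) ^ (∑ j, ((x.1 j).val * (y.2 j).val + (x.2 j).val * (y.1 j).val)) := by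
    rw [sympl_eq_cast, neg_one_pow_natCast_val]
  have hsum : (∑ j, ((x.1 j).val * (y.2 j).val + (x.2 j).val * (y.1 j).val))
      = (∑ j, (x.1 j).val * (y.2 j).val) + ∑ j, (x.2 j).val * (y.1 j).val :=
    Finset.sum_add_distrib
  have hE2 : (∑ j, (y.2 j).val * (x.1 j).val) = ∑ j, (x.1 j).val * (y.2 j).val :=
    Finset.sum_congr rfl fun j _ => Nat.mul_comm _ _
  rw [hv, hsum, pow_add, hE2, show sPh y + sPh x = sPh x + sPh y from add_comm _ _]
  have hne : (Complex.I : ℂ) ^ sPh (x + y) ≠ 0 := pow_ne_zero _ Complex.I_ne_zero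
  field_simp
  ring_nf
  rw [Even.neg_one_pow (⟨∑ j, (x.1 j).val * (y.2 j).val, by ring⟩ :
    Even ((∑ j, (x.1 j).val * (y.2 j).val) * 2)), mul_one]

lemma weyl_conjTranspose (x : PhS n) : (Weyl x)ᴴ = Weyl x := by
  ext u v
  rw [Matrix.conjTranspose_apply, weyl_apply, weyl_apply]
  rw [star_mul']
  have h1 : star ((Complex.I : ℂ) ^ sPh x) = (-Complex.I) ^ sPh x := by
    rw [star_pow, Complex.star_def, Complex.conj_I]
  have h2 : star (∏ j, PQ (x.1 j) (x.2 j) (v j) (u j))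
      = ∏ j, ((-1:ℂ) ^ ((x.1 j).val * (x.2 j).val) * PQ (x.1 j) (x.2 j) (u j) (v j)) := by
    rw [show (star : ℂ → ℂ) = (starRingEnd ℂ) from rfl, map_prod]
    exact Finset.prod_congr rfl fun j _ => PQ_conj _ _ _ _
  rw [h1, h2, Finset.prod_mul_distrib, Finset.prod_pow_eq_pow_sum]
  have : ((-Complex.I) ^ sPh x) * ((-1:ℂ) ^ sPh x) = Complex.I ^ sPh x := by
    rw [← mul_pow]; norm_num
  rw [show sPh x = ∑ j, (x.1 j).val * (x.2 j).val from rfl] at this ⊢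
  rw [← mul_assoc, this]

lemma weyl_ortho (p q u v : QIdx n) :
    ∑ x : PhS n, Weyl x q p * Weyl x u v =
      if u = p ∧ q = v then (2^n : ℂ) else 0 := by
  have hterm : ∀ x : PhS n, Weyl x q p * Weyl x u v =
      ∏ j, ((-1:ℂ) ^ ((x.1 j).val * (x.2 j).val) *
        (PQ (x.1 j) (x.2 j) (q j) (p j) * PQ (x.1 j) (x.2 j) (u j) (v j))) := by
    intro x
    rw [weyl_apply, weyl_apply, Finset.prod_mul_distrib, Finset.prod_mul_distrib,
      Finset.prod_pow_eq_pow_sum]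
    have : (Complex.I ^ sPh x) * (∏ j, PQ (x.1 j) (x.2 j) (q j) (p j)) *
        ((Complex.I ^ sPh x) * ∏ j, PQ (x.1 j) (x.2 j) (u j) (v j))
        = (Complex.I ^ sPh x * Complex.I ^ sPh x) *
          ((∏ j, PQ (x.1 j) (x.2 j) (q j) (p j)) * ∏ j, PQ (x.1 j) (x.2 j) (u j) (v j)) := by
      ring
    rw [this, ← pow_add, ← two_mul, pow_mul, Complex.I_sq,
      show sPh x = ∑ j, (x.1 j).val * (x.2 j).val from rfl]
  simp only [hterm]
  have hsplit : ∑ x : PhS n, (∏ j, ((-1:ℂ) ^ ((x.1 j).val * (x.2 j).val) *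
        (PQ (x.1 j) (x.2 j) (q j) (p j) * PQ (x.1 j) (x.2 j) (u j) (v j))))
      = ∑ f : Fin n → F2, ∑ g : Fin n → F2, ∏ j, ((-1:ℂ) ^ ((f j).val * (g j).val) *
        (PQ (f j) (g j) (q j) (p j) * PQ (f j) (g j) (u j) (v j))) := by
    exact Fintype.sum_prod_type (f := fun x : (Fin n → F2) × (Fin n → F2) =>
      ∏ j, ((-1:ℂ) ^ ((x.1 j).val * (x.2 j).val) *
        (PQ (x.1 j) (x.2 j) (q j) (p j) * PQ (x.1 j) (x.2 j) (u j) (v j))))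
  rw [hsplit]
  have hinner : ∀ f : Fin n → F2,
      ∑ g : Fin n → F2, ∏ j, ((-1:ℂ) ^ ((f j).val * (g j).val) *
        (PQ (f j) (g j) (q j) (p j) * PQ (f j) (g j) (u j) (v j)))
      = ∏ j, ∑ b : F2, ((-1:ℂ) ^ ((f j).val * b.val) *
        (PQ (f j) b (q j) (p j) * PQ (f j) b (u j) (v j))) := fun f =>
    (Fintype.prod_sum (fun (j : Fin n) (b : F2) => (-1:ℂ) ^ ((f j).val * b.val) *
        (PQ (f j) b (q j) (p j) * PQ (f j) b (u j) (v j)))).symm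
  simp only [hinner]
  have houter : ∑ f : Fin n → F2, ∏ j, (∑ b : F2, ((-1:ℂ) ^ ((f j).val * b.val) *
        (PQ (f j) b (q j) (p j) * PQ (f j) b (u j) (v j))))
      = ∏ j, ∑ a : F2, ∑ b : F2, ((-1:ℂ) ^ (a.val * b.val) *
        (PQ a b (q j) (p j) * PQ a b (u j) (v j))) :=
    (Fintype.prod_sum (fun (j : Fin n) (a : F2) => ∑ b : F2, ((-1:ℂ) ^ (a.val * b.val) *
        (PQ a b (q j) (p j) * PQ a b (u j) (v j))))).symm
  rw [houter]
  have hq : ∀ j : Fin n, (∑ a : F2, ∑ b : F2, ((-1:ℂ) ^ (a.val * b.val) *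
      (PQ a b (q j) (p j) * PQ a b (u j) (v j))))
      = if u j = p j ∧ q j = v j then 2 else 0 := fun j => PQ_ortho (p j) (q j) (u j) (v j)
  simp only [hq]
  by_cases h : u = p ∧ q = v
  · obtain ⟨h1, h2⟩ := h
    subst h1; subst h2
    simp [Finset.prod_const, Finset.card_univ]
  · rw [if_neg h]
    have : ∃ j : Fin n, ¬(u j = p j ∧ q j = v j) := by
      by_contra hc
      push_neg at hc
      exact h ⟨funext fun j => (hc j).1, funext fun j => (hc j).2⟩
    obtain ⟨j, hj⟩ := this
    exact Finset.prod_eq_zero (Finset.mem_univ j) (if_neg hj)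

lemma weyl_complete (A : Matrix (QIdx n) (QIdx n) ℂ) :
    A = (2^n : ℂ)⁻¹ • ∑ x : PhS n, (A * Weyl x).trace • Weyl x := by
  ext u v
  rw [Matrix.smul_apply, Matrix.sum_apply, smul_eq_mul]
  have hx : ∀ x : PhS n, ((A * Weyl x).trace • Weyl x) u v
      = ∑ p, ∑ q, A p q * (Weyl x q p * Weyl x u v) := by
    intro x
    rw [Matrix.smul_apply, smul_eq_mul, Matrix.trace, Finset.sum_mul]
    refine Finset.sum_congr rfl fun p _ => ?_
    rw [Matrix.diag_apply, Matrix.mul_apply, Finset.sum_mul]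
    exact Finset.sum_congr rfl fun q _ => by ring
  simp only [hx]
  rw [Finset.sum_comm]
  have h1 : ∀ p, ∑ x : PhS n, ∑ q, A p q * (Weyl x q p * Weyl x u v)
      = if u = p then A p v * (2^n : ℂ) else 0 := by
    intro p
    have e1 : ∑ x : PhS n, ∑ q, A p q * (Weyl x q p * Weyl x u v)
        = ∑ q, A p q * (if u = p ∧ q = v then (2^n : ℂ) else 0) := by
      rw [Finset.sum_comm]
      refine Finset.sum_congr rfl fun q _ => ?_
      rw [← weyl_ortho p q u v, Finset.mul_sum]
    rw [e1]
    simp only [mul_ite, mul_zero, ite_and]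
    by_cases hup : u = p
    · simp [hup]
    · simp [hup]
  simp only [h1]
  simp only [Finset.sum_ite_eq, Finset.mem_univ, if_true]
  rw [mul_comm (A u v), ← mul_assoc, inv_mul_cancel₀ (pow_ne_zero n (two_ne_zero : (2:ℂ) ≠ 0)), one_mul]

lemma sympl_add_right (x y z : PhS n) :
    sympl x (y + z) = sympl x y + sympl x z := by
  rw [sympl_comm, sympl_add_left, sympl_comm y x, sympl_comm z x]

lemma sympl_smul_right (c : F2) (x z : PhS n) :
    sympl x (c • z) = c * sympl x z := by
  rw [sympl_comm, sympl_smul_left, sympl_comm z x]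

noncomputable def symB (n : ℕ) : LinearMap.BilinForm F2 (PhS n) :=
  LinearMap.mk₂ F2 sympl sympl_add_left sympl_smul_left sympl_add_right sympl_smul_right

lemma symB_apply (x y : PhS n) : symB n x y = sympl x y := rfl

lemma symB_isRefl : (symB n).IsRefl := fun x y h => by
  rwa [symB_apply, sympl_comm, ← symB_apply]

lemma symB_nondegen : (symB n).Nondegenerate := by
  suffices hL : LinearMap.SeparatingLeft (symB n) from
    ⟨hL, fun y hy => hL y fun x => by rw [symB_apply, sympl_comm, ← symB_apply]; exact hy x⟩
  intro x hx
  have h1 : ∀ j, x.1 j = 0 := by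
    intro j
    have := hx (0, Pi.single j 1)
    simpa [symB_apply, sympl, Pi.single_apply, mul_ite, Finset.sum_ite_eq'] using this
  have h2 : ∀ j, x.2 j = 0 := by
    intro j
    have := hx (Pi.single j 1, 0)
    simpa [symB_apply, sympl, Pi.single_apply, mul_ite, Finset.sum_ite_eq'] using this
  exact Prod.ext (funext h1) (funext h2)

lemma mem_of_double_orth (S : Submodule F2 (PhS n)) (x : PhS n)
    (hx : ∀ z ∈ (symB n).orthogonal S, sympl z x = 0) : x ∈ S := by
  rw [← LinearMap.BilinForm.orthogonal_orthogonal (B := symB n) symB_nondegen symB_isRefl S]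
  intro z hz
  exact hx z hz

lemma char_sum (S : Submodule F2 (PhS n)) (x : PhS n) :
    ∑ z : (symB n).orthogonal S, ((-1:ℂ)) ^ (sympl x (z : PhS n)).val =
      if x ∈ S then (Fintype.card ((symB n).orthogonal S) : ℂ) else 0 := by
  by_cases hx : x ∈ S
  · rw [if_pos hx]
    have h0 : ∀ z : (symB n).orthogonal S, (sympl x (z : PhS n)).val = 0 := by
      intro z
      have hz := z.2
      rw [LinearMap.BilinForm.mem_orthogonal_iff] at hz
      have := hz x hx
      rw [symB_apply] at this
      rw [this]
      rfl
    simp [h0, Finset.card_univ]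
  · rw [if_neg hx]
    have hex : ∃ z0 ∈ (symB n).orthogonal S, sympl z0 x ≠ 0 := by
      by_contra hc
      push_neg at hc
      exact hx (mem_of_double_orth S x hc)
    obtain ⟨z0, hz0mem, hz0⟩ := hex
    have h1 : sympl x z0 = 1 := by
      rw [sympl_comm]
      rcases F2cases (sympl z0 x) with h | h
      · exact absurd h hz0
      · exact h
    set c : (symB n).orthogonal S := ⟨z0, hz0mem⟩ with hc
    set g : (symB n).orthogonal S → ℂ := fun z => ((-1:ℂ)) ^ (sympl x (z : PhS n)).val with hg
    have key : ∀ z : (symB n).orthogonal S, g (z + c) = - g z := by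
      intro z
      have hcoe : ((z + c : (symB n).orthogonal S) : PhS n) = (z : PhS n) + z0 := rfl
      rw [hg]
      simp only [hcoe]
      rw [sympl_add_right, h1]
      rcases F2cases (sympl x (z : PhS n)) with h | h <;> rw [h] <;>
        norm_num [show ((1:F2)).val = 1 from rfl, show ((2:F2)).val = 0 from rfl]
    have hsum : ∑ z, g z = - ∑ z, g z := by
      conv_lhs => rw [← Equiv.sum_comp (Equiv.addRight c) g]
      have : ∀ z : (symB n).orthogonal S, g (Equiv.addRight c z) = - g z := fun z => key z
      rw [Finset.sum_congr rfl fun z _ => this z, Finset.sum_neg_distrib]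
    have : ∑ z, g z = 0 := by
      have h2 : (2 : ℂ) * ∑ z, g z = 0 := by
        rw [two_mul]
        nth_rewrite 2 [hsum]
        ring
      exact (mul_eq_zero.mp h2).resolve_left (two_ne_zero)
    exact this

lemma pauliProj_eq (S : Submodule F2 (PhS n)) (A : Matrix (QIdx n) (QIdx n) ℂ) :
    pauliProj (S : Set (PhS n)) A =
      (2 ^ n : ℂ)⁻¹ • ∑ x : PhS n,
        (if x ∈ S then (A * Weyl x).trace else 0) • Weyl x := by
  rw [pauliProj]
  congr 1
  have hset : (S : Set (PhS n)) = ↑(Finset.univ.filter (fun x => x ∈ S)) := by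
    ext x; simp
  rw [hset, finsum_mem_coe_finset, Finset.sum_filter]
  refine Finset.sum_congr rfl fun x _ => ?_
  by_cases hx : x ∈ S <;> simp [hx]

lemma conj_formula (S : Submodule F2 (PhS n)) (A : Matrix (QIdx n) (QIdx n) ℂ)
    (z : (symB n).orthogonal S) :
    Weyl (z : PhS n) * A * Weyl (z : PhS n) =
      (2 ^ n : ℂ)⁻¹ • ∑ x : PhS n,
        ((A * Weyl x).trace * (-1:ℂ) ^ ((sympl x (z : PhS n)).val)) • Weyl x := by
  conv_lhs => rw [weyl_complete A]
  rw [mul_smul_comm, smul_mul_assoc]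
  congr 1
  rw [Finset.mul_sum, Finset.sum_mul]
  refine Finset.sum_congr rfl fun x _ => ?_
  rw [mul_smul_comm, smul_mul_assoc]
  have hzxz : Weyl (z : PhS n) * Weyl x * Weyl (z : PhS n) =
      ((-1:ℂ) ^ ((sympl x (z : PhS n)).val)) • Weyl x := by
    calc Weyl (z : PhS n) * Weyl x * Weyl (z : PhS n)
        = (((-1:ℂ) ^ ((sympl (z : PhS n) x).val)) • (Weyl x * Weyl (z : PhS n))) *
          Weyl (z : PhS n) := by rw [← weyl_comm]
      _ = ((-1:ℂ) ^ ((sympl (z : PhS n) x).val)) •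
          (Weyl x * (Weyl (z : PhS n) * Weyl (z : PhS n))) := by
          rw [smul_mul_assoc, mul_assoc]
      _ = ((-1:ℂ) ^ ((sympl x (z : PhS n)).val)) • Weyl x := by
          rw [weyl_self, mul_one, sympl_comm]
  rw [hzxz, smul_smul]

lemma proj_eq_avg (S : Submodule F2 (PhS n)) (A : Matrix (QIdx n) (QIdx n) ℂ) :
    pauliProj (S : Set (PhS n)) A =
      (Fintype.card ((symB n).orthogonal S) : ℂ)⁻¹ •
        ∑ z : (symB n).orthogonal S, Weyl (z : PhS n) * A * Weyl (z : PhS n) := by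
  have hcard : (Fintype.card ((symB n).orthogonal S) : ℂ) ≠ 0 :=
    Nat.cast_ne_zero.mpr Fintype.card_ne_zero
  have step1 : ∑ z : (symB n).orthogonal S, Weyl (z : PhS n) * A * Weyl (z : PhS n)
      = (2 ^ n : ℂ)⁻¹ • ∑ x : PhS n,
          ((A * Weyl x).trace *
            (if x ∈ S then (Fintype.card ((symB n).orthogonal S) : ℂ) else 0)) • Weyl x := by
    rw [Finset.sum_congr rfl fun z _ => conj_formula S A z, ← Finset.smul_sum]
    congr 1
    rw [Finset.sum_comm]
    refine Finset.sum_congr rfl fun x _ => ?_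
    rw [← char_sum S x, Finset.mul_sum, ← Finset.sum_smul]
  rw [pauliProj_eq, step1, smul_smul, mul_comm, ← smul_smul]
  congr 1
  rw [Finset.smul_sum]
  refine Finset.sum_congr rfl fun x _ => ?_
  rw [smul_smul]
  congr 1
  by_cases hx : x ∈ S
  · rw [if_pos hx, if_pos hx, mul_comm ((A * Weyl x).trace), ← mul_assoc,
      inv_mul_cancel₀ hcard, one_mul]
  · rw [if_neg hx, if_neg hx, mul_zero, mul_zero]

open scoped Matrix.Norms.L2Operator

lemma l2OpNorm_eq_norm (A : Matrix (QIdx n) (QIdx n) ℂ) : l2OpNorm A = ‖A‖ := rfl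

lemma norm_one_matrix : ‖(1 : Matrix (QIdx n) (QIdx n) ℂ)‖ = 1 := by
  haveI : Nonempty (QIdx n) := ⟨fun _ => 0⟩
  rw [Matrix.cstar_norm_def, _root_.map_one, ContinuousLinearMap.one_def]
  exact ContinuousLinearMap.norm_id

lemma weyl_norm (x : PhS n) : ‖Weyl x‖ = 1 := by
  have h := Matrix.l2_opNorm_conjTranspose_mul_self (Weyl x)
  rw [weyl_conjTranspose, weyl_self, norm_one_matrix] at h
  have h2 := mul_self_eq_one_iff.mp h.symm
  rcases h2 with h2 | h2
  · exact h2
  · exfalso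
    have := norm_nonneg (Weyl x)
    rw [h2] at this
    linarith

theorem stmt6' (S : Submodule F2 (PhS n)) (A : Matrix (QIdx n) (QIdx n) ℂ) :
    l2OpNorm (pauliProj (S : Set (PhS n)) A) ≤ l2OpNorm A := by
  rw [l2OpNorm_eq_norm, l2OpNorm_eq_norm, proj_eq_avg S A]
  set k := Fintype.card ((symB n).orthogonal S) with hk
  have hkpos : 0 < k := Fintype.card_pos
  have hterm : ∀ z : (symB n).orthogonal S,
      ‖Weyl (z : PhS n) * A * Weyl (z : PhS n)‖ ≤ ‖A‖ := by
    intro z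
    calc ‖Weyl (z : PhS n) * A * Weyl (z : PhS n)‖
        ≤ ‖Weyl (z : PhS n) * A‖ * ‖Weyl (z : PhS n)‖ := norm_mul_le _ _
      _ ≤ ‖Weyl (z : PhS n)‖ * ‖A‖ * ‖Weyl (z : PhS n)‖ := by
          gcongr; exact norm_mul_le _ _
      _ = ‖A‖ := by rw [weyl_norm, one_mul, mul_one]
  calc ‖(k : ℂ)⁻¹ • ∑ z : (symB n).orthogonal S, Weyl (z : PhS n) * A * Weyl (z : PhS n)‖
      = ‖((k : ℂ))⁻¹‖ * ‖∑ z : (symB n).orthogonal S, Weyl (z : PhS n) * A * Weyl (z : PhS n)‖ :=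
        norm_smul _ _
    _ ≤ (k : ℝ)⁻¹ * ∑ z : (symB n).orthogonal S, ‖Weyl (z : PhS n) * A * Weyl (z : PhS n)‖ := by
        rw [norm_inv, Complex.norm_natCast]
        gcongr
        exact norm_sum_le _ _
    _ ≤ (k : ℝ)⁻¹ * (k * ‖A‖) := by
        gcongr
        have := Finset.sum_le_card_nsmul (Finset.univ : Finset ((symB n).orthogonal S))
          (fun z => ‖Weyl (z : PhS n) * A * Weyl (z : PhS n)‖) ‖A‖
          (fun z _ => hterm z)
        rwa [Finset.card_univ, nsmul_eq_mul] at this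
    _ = ‖A‖ := by
        field_simp

end Aux

theorem stmt6 (n : ℕ) (S : Submodule F2 (PhS n)) (A : Matrix (QIdx n) (QIdx n) ℂ) :
    l2OpNorm (pauliProj (S : Set (PhS n)) A) ≤ l2OpNorm A := by
  exact stmt6' S A

end PauliSpec
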